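/- arXiv:1604.00920 — 4 statements merged into one kernel-verified Lean document; each statement's English description precedes it below -/
import Mathlib

section
/- Let K be a field, let α, m be positive natural numbers, and let u ∈ K with u ≠ 0 and u ≠ 1. Set x = (u-1)/u^(α*m) and z = ((u^m - 1)/(u-1)) * u^(α*m). Then x*z + 1 = u^m, and consequently 1^(2α+1) + x*(x*z + 1^2)^α = u. In other words, the polynomial F(X,Y,Z) = Y^(2α+1) + X*(X*Z + Y^2)^α satisfies F(x, 1, z) = u. -/
theorem bicuspidal_point_eval (K : Type*) [Field K] (α m : ℕ) (hα : 0 < α) (hm : 0 < m)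
    (u : K) (hu0 : u ≠ 0) (hu1 : u ≠ 1)
    (x z : K)
    (hx : x = (u - 1) / u ^ (α * m))
    (hz : z = ((u ^ m - 1) / (u - 1)) * u ^ (α * m)) :
    x * z + 1 = u ^ m ∧ 1 ^ (2 * α + 1) + x * (x * z + 1 ^ 2) ^ α = u := by
  have hu1' : u - 1 ≠ 0 := sub_ne_zero.mpr hu1
  have hup : (u : K) ^ (α * m) ≠ 0 := pow_ne_zero _ hu0
  have h1 : x * z + 1 = u ^ m := by
    subst hx hz
    field_simp
    ring
  refine ⟨h1, ?_⟩
  rw [one_pow, one_pow, h1, hx, div_mul_eq_mul_div, ← pow_mul, mul_comm m α,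
    mul_div_cancel_right₀ _ hup]
  ring
end

section
/- Let K be a field, b a positive natural number, a ∈ K, and let u, t ∈ K with u ≠ 1 and t ≠ 0. Set x = (u-1)/t^b and z = t^b * (t^(b+1) - t^b - a*(u-1)) / (u-1)^2. Then x^2 * z + a*x + 1 = t, and consequently 1^(3b+1) + x*(x^2*z + a*x*1^2 + 1^3)^b = u. In other words, the polynomial F(X,Y,Z) = Y^(3b+1) + X*(X^2*Z + a*X*Y^2 + Y^3)^b satisfies F(x, 1, z) = u. -/
theorem bicuspidal_point_eval2 (K : Type*) [Field K] (b : ℕ) (hb : 0 < b) (a : K)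
    (u t : K) (hu1 : u ≠ 1) (ht : t ≠ 0)
    (x z : K)
    (hx : x = (u - 1) / t ^ b)
    (hz : z = t ^ b * (t ^ (b + 1) - t ^ b - a * (u - 1)) / (u - 1) ^ 2) :
    x ^ 2 * z + a * x + 1 = t ∧
      1 ^ (3 * b + 1) + x * (x ^ 2 * z + a * x * 1 ^ 2 + 1 ^ 3) ^ b = u := by
  have hu : u - 1 ≠ 0 := sub_ne_zero.mpr hu1
  have htb : t ^ b ≠ 0 := pow_ne_zero _ ht
  have h1 : x ^ 2 * z + a * x + 1 = t := by
    subst hx hz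
    field_simp
    ring
  refine ⟨h1, ?_⟩
  have h2 : x ^ 2 * z + a * x * 1 ^ 2 + 1 ^ 3 = t := by simpa using h1
  rw [h2, hx, one_pow, div_mul_cancel₀ _ htb]
  ring
end

section
/- Let d ≥ 2 be a natural number and let F ∈ ℤ[X,Y] be a nonzero polynomial in two variables. Then the set { n : ℕ | F(3^(d^n), 2^(d^n)) = 0 } is finite. -/
open MvPolynomial Finset Filter

lemma key_sum_finite {ι : Type*} (s : Finset ι) (c : ι → ℤ) (t : ι → ℕ)
    (ht : Set.InjOn t s) (h1 : ∀ i ∈ s, 1 ≤ t i) (hc : ∃ i ∈ s, c i ≠ 0) :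
    {K : ℕ | ∑ i ∈ s, c i * (t i : ℤ) ^ K = 0}.Finite := by
  classical
  set s' : Finset ι := s.filter (fun i => c i ≠ 0) with hs'def
  have hsub : s' ⊆ s := Finset.filter_subset _ _
  have hs' : s'.Nonempty := by
    obtain ⟨i, hi, hci⟩ := hc
    exact ⟨i, Finset.mem_filter.mpr ⟨hi, hci⟩⟩
  have hsum : ∀ K, ∑ i ∈ s, c i * (t i : ℤ) ^ K = ∑ i ∈ s', c i * (t i : ℤ) ^ K := by
    intro K
    refine (Finset.sum_filter_of_ne ?_).symm
    intro i hi h hci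
    exact h (by rw [hci]; ring)
  obtain ⟨i0, hi0, hmax⟩ := s'.exists_max_image t hs'
  set M := t i0 with hM
  have hM1 : 1 ≤ M := h1 i0 (hsub hi0)
  have hci0 : c i0 ≠ 0 := (Finset.mem_filter.mp hi0).2
  have herase : ∀ i ∈ s'.erase i0, t i ≤ M - 1 := by
    intro i hi
    have hine := Finset.ne_of_mem_erase hi
    have his' := Finset.mem_of_mem_erase hi
    have hle := hmax i his'
    have : t i ≠ M := fun h => hine (ht (hsub his') (hsub hi0) h)
    omega
  rcases eq_or_lt_of_le hM1 with hM1' | hM2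
  · -- M = 1, erase is empty
    have hempty : s'.erase i0 = ∅ := by
      rw [Finset.eq_empty_iff_forall_notMem]
      intro i hi
      have := herase i hi
      have := h1 i (hsub (Finset.mem_of_mem_erase hi))
      omega
    have hne : ∀ K, ∑ i ∈ s, c i * (t i : ℤ) ^ K ≠ 0 := by
      intro K
      rw [hsum, ← Finset.add_sum_erase _ _ hi0, hempty]
      have ht1 : (t i0 : ℤ) = 1 := by exact_mod_cast hM1'.symm
      simp [ht1, hci0]
    refine Set.Finite.subset Set.finite_empty ?_
    intro K hK
    exact (hne K hK).elim
  · -- M ≥ 2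
    set C : ℝ := ∑ i ∈ s', |(c i : ℝ)| with hC
    have hCnn : 0 ≤ C := Finset.sum_nonneg fun i _ => abs_nonneg _
    have hM1R : (1 : ℝ) < (M : ℝ) := by exact_mod_cast hM2
    have hratio : (1 : ℝ) < (M : ℝ) / ((M : ℝ) - 1) := by
      rw [lt_div_iff₀ (by linarith)]
      linarith
    have htend := tendsto_pow_atTop_atTop_of_one_lt hratio
    have hev : ∀ᶠ K in atTop, C * ((M : ℝ) - 1) ^ K < (M : ℝ) ^ K := by
      filter_upwards [htend.eventually_gt_atTop C] with K hK
      have hpos : (0 : ℝ) < ((M : ℝ) - 1) ^ K := pow_pos (by linarith) K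
      rw [div_pow, lt_div_iff₀ hpos] at hK
      linarith
    have hev2 : ∀ᶠ K in atTop, ∑ i ∈ s, c i * (t i : ℤ) ^ K ≠ 0 := by
      filter_upwards [hev] with K hK habs
      rw [hsum, ← Finset.add_sum_erase _ _ hi0] at habs
      have habsR : (c i0 : ℝ) * (M : ℝ) ^ K
          + ∑ i ∈ s'.erase i0, (c i : ℝ) * (t i : ℝ) ^ K = 0 := by
        exact_mod_cast congrArg (fun z : ℤ => (z : ℝ)) habs
      have hrest : |∑ i ∈ s'.erase i0, (c i : ℝ) * (t i : ℝ) ^ K|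
          ≤ C * ((M : ℝ) - 1) ^ K := by
        calc |∑ i ∈ s'.erase i0, (c i : ℝ) * (t i : ℝ) ^ K|
            ≤ ∑ i ∈ s'.erase i0, |(c i : ℝ) * (t i : ℝ) ^ K| :=
              Finset.abs_sum_le_sum_abs _ _
          _ ≤ ∑ i ∈ s'.erase i0, |(c i : ℝ)| * ((M : ℝ) - 1) ^ K := by
              refine Finset.sum_le_sum fun i hi => ?_
              rw [abs_mul, abs_pow, Nat.abs_cast]
              refine mul_le_mul_of_nonneg_left (pow_le_pow_left₀ (by positivity) ?_ K)
                (abs_nonneg _)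
              have := herase i hi
              have : (t i : ℝ) ≤ ((M - 1 : ℕ) : ℝ) := by exact_mod_cast this
              rwa [Nat.cast_sub hM1, Nat.cast_one] at this
          _ ≤ ∑ i ∈ s', |(c i : ℝ)| * ((M : ℝ) - 1) ^ K := by
              refine Finset.sum_le_sum_of_subset_of_nonneg (Finset.erase_subset _ _)
                fun i _ _ => mul_nonneg (abs_nonneg _) (pow_nonneg (by linarith) K)
          _ = C * ((M : ℝ) - 1) ^ K := by rw [hC, Finset.sum_mul]
      have hmain : (M : ℝ) ^ K ≤ |(c i0 : ℝ) * (M : ℝ) ^ K| := by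
        rw [abs_mul, abs_pow, Nat.abs_cast]
        have h1' : (1 : ℝ) ≤ |(c i0 : ℝ)| := by
          have := Int.one_le_abs hci0
          exact_mod_cast this
        nlinarith [pow_nonneg (le_of_lt (by linarith : (0:ℝ) < (M:ℝ))) K]
      have heq : |(c i0 : ℝ) * (M : ℝ) ^ K|
          = |∑ i ∈ s'.erase i0, (c i : ℝ) * (t i : ℝ) ^ K| := by
        have : (c i0 : ℝ) * (M : ℝ) ^ K
            = -(∑ i ∈ s'.erase i0, (c i : ℝ) * (t i : ℝ) ^ K) := by linarith
        rw [this, abs_neg]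
      linarith
    rw [← Nat.cofinite_eq_atTop, Filter.eventually_cofinite] at hev2
    simpa using hev2

lemma pow23_inj : Function.Injective (fun m : Fin 2 →₀ ℕ => 3 ^ (m 0) * 2 ^ (m 1)) := by
  intro m m' h
  simp only at h
  have h3 := congrArg (fun n : ℕ => n.factorization 3) h
  have h2 := congrArg (fun n : ℕ => n.factorization 2) h
  simp [Nat.factorization_mul (pow_ne_zero _ three_ne_zero) (pow_ne_zero _ two_ne_zero),
    Nat.Prime.factorization_pow, Nat.prime_two, Nat.prime_three, Finsupp.single_apply] at h3 h2
  ext i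
  fin_cases i
  · exact h3
  · exact h2

theorem orbit_finite_on_curve (d : ℕ) (hd : 2 ≤ d)
    (F : MvPolynomial (Fin 2) ℤ) (hF : F ≠ 0) :
    {n : ℕ | eval ![(3 : ℤ) ^ (d ^ n), (2 : ℤ) ^ (d ^ n)] F = 0}.Finite := by
  classical
  have heval : ∀ K : ℕ, eval ![(3 : ℤ) ^ K, (2 : ℤ) ^ K] F
      = ∑ m ∈ F.support, coeff m F * (((3 ^ (m 0) * 2 ^ (m 1) : ℕ) : ℤ)) ^ K := by
    intro K
    rw [eval_eq']
    refine Finset.sum_congr rfl fun m _ => ?_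
    congr 1
    rw [Fin.prod_univ_two]
    push_cast
    rw [mul_pow, ← pow_mul, ← pow_mul, mul_comm K (m 0), mul_comm K (m 1),
      pow_mul, pow_mul]
  have hfin : {K : ℕ | eval ![(3 : ℤ) ^ K, (2 : ℤ) ^ K] F = 0}.Finite := by
    have := key_sum_finite F.support (fun m => coeff m F)
      (fun m => 3 ^ (m 0) * 2 ^ (m 1)) pow23_inj.injOn
      (fun m _ => Nat.one_le_iff_ne_zero.mpr (by positivity))
      (by
        obtain ⟨m, hm⟩ := (MvPolynomial.support_nonempty.mpr hF)
        exact ⟨m, hm, MvPolynomial.mem_support_iff.mp hm⟩)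
    have hsets : {K : ℕ | eval ![(3 : ℤ) ^ K, (2 : ℤ) ^ K] F = 0}
        = {K : ℕ | ∑ m ∈ F.support, coeff m F * (((3 ^ (m 0) * 2 ^ (m 1) : ℕ) : ℤ)) ^ K = 0} := by
      ext K
      simp only [Set.mem_setOf_eq, heval K]
    rw [hsets]
    exact this
  have : {n : ℕ | eval ![(3 : ℤ) ^ (d ^ n), (2 : ℤ) ^ (d ^ n)] F = 0}
      = (fun n => d ^ n) ⁻¹' {K : ℕ | eval ![(3 : ℤ) ^ K, (2 : ℤ) ^ K] F = 0} := rfl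
  rw [this]
  exact Set.Finite.preimage ((Nat.pow_right_injective hd).injOn) hfin
end

section
/- Let K be a field, let u ∈ K with u ≠ 1, let b be a positive natural number, a ∈ K, and t ∈ K nonzero such that (u-1)^2 divides t^(b+1) - t^b - a*(u-1) in the sense that w := (t^(b+1) - t^b - a*(u-1))/(u-1)^2 lies in K. Set x = (u-1)/t^b and y = t^b * w. Then x * (x^2 * y + (a*x + 1)*1^2)^b evaluated in the polynomial Z^(1+3b) + X*(X^2*Y + (a*X + Z)*Z^2)^b with Z = 1 gives: 1^(1+3b) + x*(x^2*y + (a*x + 1))^b = u. -/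
theorem line_curve_point_eval (K : Type*) [Field K] (u : K) (hu : u ≠ 1)
    (b : ℕ) (hb : 0 < b) (a t : K) (ht : t ≠ 0)
    (w x y : K)
    (hw : w = (t ^ (b + 1) - t ^ b - a * (u - 1)) / (u - 1) ^ 2)
    (hx : x = (u - 1) / t ^ b) (hy : y = t ^ b * w) :
    1 ^ (1 + 3 * b) + x * (x ^ 2 * y + (a * x + 1)) ^ b = u := by
  have hu1 : u - 1 ≠ 0 := sub_ne_zero.mpr hu
  have htb : (t:K) ^ b ≠ 0 := pow_ne_zero _ ht
  have key : x ^ 2 * y + (a * x + 1) = t := by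
    subst hw hx hy
    field_simp
    ring
  rw [key, hx]
  field_simp
  rw [one_pow]
  ring
end
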